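/- Let λ(G) be a temporal graph, where G = (V,E) is a digraph, and let s, v ∈ V be two distinguished vertices. Then the maximum number of pairwise in-disjoint journeys from s to v in λ(G) is equal to the minimum number of node arrival times that need to be removed in order to leave no journey from s to v. -/

import Mathlib

/-- A journey (time-respecting path) in a temporal digraph with edge relation `E`
and labeling `lab`, from `s` to `v`: a walk along edges of the digraph together
with a strictly increasing sequence of labels, each chosen from the label set of
the corresponding edge. -/
structure Journey {V : Type*} (E : V → V → Prop) (lab : V → V → Finset ℕ)
    (s v : V) where
  len : ℕ
  vert : Fin (len + 1) → V
  lbl : Fin len → ℕ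
  first : vert 0 = s
  last : vert (Fin.last len) = v
  edge : ∀ i : Fin len, E (vert i.castSucc) (vert i.succ)
  mem : ∀ i : Fin len, lbl i ∈ lab (vert i.castSucc) (vert i.succ)
  mono : StrictMono lbl

/-- Two journeys are in-disjoint if they never arrive at the same node at the same time. -/
def InDisjoint {V : Type*} {E : V → V → Prop} {lab : V → V → Finset ℕ}
    {s₁ v₁ s₂ v₂ : V} (J : Journey E lab s₁ v₁) (J' : Journey E lab s₂ v₂) : Prop :=
  ∀ (i : Fin J.len) (j : Fin J'.len),
    J.vert i.succ = J'.vert j.succ → J.lbl i ≠ J'.lbl j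

/-- The labeling obtained by removing the node arrival times in `D`:
for `(u, t) ∈ D`, the label `t` is deleted from all edges entering `u`. -/
def removeArrivals {V : Type*} [DecidableEq V] (lab : V → V → Finset ℕ)
    (D : Finset (V × ℕ)) : V → V → Finset ℕ :=
  fun u w => (lab u w).filter (fun t => (w, t) ∉ D)

theorem List.chain'_iff_get {α : Type*} {R : α → α → Prop} {l : List α} :
    List.Chain' R l ↔ ∀ (i : ℕ) (h : i < l.length - 1),
      R (l.get ⟨i, by omega⟩) (l.get ⟨i + 1, by omega⟩) := by
  show List.IsChain R l ↔ _
  rw [List.isChain_iff_getElem]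
  simp only [List.get_eq_getElem]
  exact ⟨fun h i hi => h i (by omega), fun h i hi => h i (by omega)⟩

namespace TMenger
variable {A : Type*} {p : A → Prop} [DecidablePred p] {l q : List A} {a : A}

/-- The prefix of `l` up to (and including) the first element satisfying `p`. -/
def cutoff (p : A → Prop) [DecidablePred p] : List A → List A
  | [] => []
  | a :: l => if p a then [a] else a :: cutoff p l

theorem cutoff_prefix (p : A → Prop) [DecidablePred p] (l : List A) : cutoff p l <+: l := by
  induction l with
  | nil => simp [cutoff]
  | cons a l ih =>
    by_cases h : p a
    · simp [cutoff, h]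
    · simpa [cutoff, h, List.cons_prefix_cons] using ih

theorem mem_of_mem_cutoff (h : a ∈ cutoff p l) : a ∈ l :=
  (cutoff_prefix p l).subset h

theorem head?_cutoff (p : A → Prop) [DecidablePred p] (l : List A) :
    (cutoff p l).head? = l.head? := by
  cases l with
  | nil => rfl
  | cons a l => by_cases h : p a <;> simp [cutoff, h]

theorem cutoff_spec (h : ∃ a ∈ l, p a) :
    ∃ m b, cutoff p l = m ++ [b] ∧ (∀ a ∈ m, ¬ p a) ∧ p b := by
  induction l with
  | nil => simp at h
  | cons a l ih =>
    by_cases ha : p a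
    · exact ⟨[], a, by simp [cutoff, ha], by simp, ha⟩
    · obtain ⟨x, hx, hpx⟩ := h
      rcases List.mem_cons.1 hx with rfl | hx
      · exact absurd hpx ha
      · obtain ⟨m, b, hmb, hm, hb⟩ := ih ⟨x, hx, hpx⟩
        refine ⟨a :: m, b, by simp [cutoff, ha, hmb], ?_, hb⟩
        intro c hc
        rcases List.mem_cons.1 hc with rfl | hc
        · exact ha
        · exact hm c hc

/-- The suffix of `l` from (and including) the last element satisfying `p`. -/
def scutoff (p : A → Prop) [DecidablePred p] (l : List A) : List A :=
  (cutoff p l.reverse).reverse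

theorem scutoff_suffix (p : A → Prop) [DecidablePred p] (l : List A) : scutoff p l <:+ l := by
  simpa [scutoff] using (cutoff_prefix p l.reverse).reverse

theorem mem_of_mem_scutoff (h : a ∈ scutoff p l) : a ∈ l :=
  (scutoff_suffix p l).subset h

theorem getLast?_scutoff (p : A → Prop) [DecidablePred p] (l : List A) :
    (scutoff p l).getLast? = l.getLast? := by
  simp [scutoff, List.getLast?_reverse, head?_cutoff, List.head?_reverse]

theorem scutoff_spec (h : ∃ a ∈ l, p a) :
    ∃ b m, scutoff p l = b :: m ∧ p b ∧ ∀ a ∈ m, ¬ p a := by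
  obtain ⟨m, b, hmb, hm, hb⟩ := cutoff_spec (l := l.reverse) (by simpa using h)
  refine ⟨b, m.reverse, by simp [scutoff, hmb], hb, by simpa using hm⟩

theorem prefix_dropLast {q l : List A} (h : q <+: l) (hlen : q.length < l.length) :
    q <+: l.dropLast := by
  rw [List.dropLast_eq_take, List.prefix_iff_eq_take.1 h]
  exact List.take_prefix_take_left (by omega)

theorem mem_dropLast_of_prefix {q l : List A} (h : q <+: l) (hlen : q.length < l.length)
    (ha : a ∈ q) : a ∈ l.dropLast :=
  (prefix_dropLast h hlen).subset ha

theorem mem_tail_of_suffix {q l : List A} (h : q <:+ l) (hlen : q.length < l.length)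
    (ha : a ∈ q) : a ∈ l.tail := by
  have h2 := mem_dropLast_of_prefix h.reverse (by simpa using hlen) (by simpa using ha)
  have key := List.tail_reverse (l := l.reverse)
  rw [List.reverse_reverse] at key
  have : a ∈ l.reverse.dropLast.reverse := by simpa using h2
  rw [← key] at this
  simpa using this

theorem mem_of_head? {l : List A} {b : A} (h : l.head? = some b) : b ∈ l := by
  cases l with
  | nil => cases h
  | cons c t =>
    simp only [List.head?_cons, Option.some.injEq] at h
    subst h
    exact List.mem_cons_self

theorem mem_of_getLast? {l : List A} {b : A} (h : l.getLast? = some b) : b ∈ l := by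
  have := List.dropLast_append_getLast? b h
  rw [← this]
  simp

variable {A : Type*} [DecidableEq A]

def IsPath (S T : Finset A) (R : Finset (A × A)) (l : List A) : Prop :=
  (∀ a ∈ l.head?, a ∈ S) ∧ (∀ a ∈ l.getLast?, a ∈ T) ∧ l ≠ [] ∧
    l.Chain' (fun x y => (x, y) ∈ R)

def IsCut (S T : Finset A) (R : Finset (A × A)) (C : Finset A) : Prop :=
  ∀ l, IsPath S T R l → ∃ a ∈ C, a ∈ l

theorem IsPath.mono {S T : Finset A} {R R' : Finset (A × A)} (h : R ⊆ R') {l : List A}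
    (hl : IsPath S T R l) : IsPath S T R' l :=
  ⟨hl.1, hl.2.1, hl.2.2.1, hl.2.2.2.imp fun _ _ hab => h hab⟩

/-- If no element of `l.dropLast` equals `x`, a chain in `R` is a chain in `R.erase (x,y)`. -/
theorem chain_erase_fst {R : Finset (A × A)} {x y : A} {l : List A}
    (hx : ∀ a ∈ l.dropLast, a ≠ x) (h : l.Chain' (fun a b => (a, b) ∈ R)) :
    l.Chain' (fun a b => (a, b) ∈ R.erase (x, y)) := by
  rw [List.chain'_iff_get] at h ⊢
  intro i hi
  refine Finset.mem_erase.2 ⟨?_, h i hi⟩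
  intro he
  have h1 : l.get ⟨i, by omega⟩ = x := congrArg Prod.fst he
  have hmem : l.get ⟨i, by omega⟩ ∈ l.dropLast := by
    have hi' : i < l.dropLast.length := by simp [List.length_dropLast]; omega
    have := List.getElem_dropLast hi'
    rw [List.get_eq_getElem, ← this]
    exact List.getElem_mem _
  exact hx _ hmem h1

/-- If no element of `l.tail` equals `y`, a chain in `R` is a chain in `R.erase (x,y)`. -/
theorem chain_erase_snd {R : Finset (A × A)} {x y : A} {l : List A}
    (hy : ∀ a ∈ l.tail, a ≠ y) (h : l.Chain' (fun a b => (a, b) ∈ R)) :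
    l.Chain' (fun a b => (a, b) ∈ R.erase (x, y)) := by
  rw [List.chain'_iff_get] at h ⊢
  intro i hi
  refine Finset.mem_erase.2 ⟨?_, h i hi⟩
  intro he
  have h1 : l.get ⟨i + 1, by omega⟩ = y := congrArg Prod.snd he
  have hmem : l.get ⟨i + 1, by omega⟩ ∈ l.tail := by
    have hi' : i < l.tail.length := by simp [List.length_tail]; omega
    have := List.getElem_tail (l := l) (i := i) hi'
    rw [List.get_eq_getElem, ← this]
    exact List.getElem_mem _
  exact hy _ hmem h1

/-- Glue two paths where the second starts where the first ends. -/
theorem isPath_glue_eq {S T X X' : Finset A} {R : Finset (A × A)} {l₁ l₂ : List A}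
    (h1 : IsPath S X R l₁) (h2 : IsPath X' T R l₂) (hconn : l₁.getLast? = l₂.head?) :
    IsPath S T R (l₁ ++ l₂.tail) := by
  obtain ⟨hh1, hl1, hn1, hc1⟩ := h1
  obtain ⟨hh2, hl2, hn2, hc2⟩ := h2
  obtain ⟨b, t, rfl⟩ : ∃ b t, l₂ = b :: t := by
    cases l₂ with
    | nil => exact absurd rfl hn2
    | cons b t => exact ⟨b, t, rfl⟩
  show IsPath S T R (l₁ ++ t)
  refine ⟨?_, ?_, by simp [hn1], ?_⟩
  · rw [List.head?_append_of_ne_nil _ hn1]; exact hh1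
  · rcases eq_or_ne t [] with rfl | ht
    · simpa [hconn] using hl2
    · obtain ⟨c, t', rfl⟩ : ∃ c t', t = c :: t' := by
        cases t with
        | nil => exact absurd rfl ht
        | cons c t' => exact ⟨c, t', rfl⟩
      rw [List.getLast?_append_of_ne_nil _ ht]
      intro a ha
      exact hl2 a (by rwa [List.getLast?_cons_cons])
  · show List.IsChain _ _; rw [List.isChain_append]
    refine ⟨hc1, hc2.tail, ?_⟩
    intro p hp q hq
    rw [hconn] at hp
    simp at hp
    subst hp
    exact (List.isChain_cons.1 hc2).1 q hq

/-- Glue two paths via an explicit edge from the end of the first to the start of the second. -/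
theorem isPath_glue_edge {S T X X' : Finset A} {R : Finset (A × A)} {l₁ l₂ : List A} {x y : A}
    (h1 : IsPath S X R l₁) (h2 : IsPath X' T R l₂) (hx : l₁.getLast? = some x)
    (hy : l₂.head? = some y) (he : (x, y) ∈ R) : IsPath S T R (l₁ ++ l₂) := by
  obtain ⟨hh1, hl1, hn1, hc1⟩ := h1
  obtain ⟨hh2, hl2, hn2, hc2⟩ := h2
  refine ⟨?_, ?_, by simp [hn1], ?_⟩
  · rw [List.head?_append_of_ne_nil _ hn1]; exact hh1
  · rw [List.getLast?_append_of_ne_nil _ hn2]; exact hl2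
  · show List.IsChain _ _; rw [List.isChain_append]
    refine ⟨hc1, hc2, ?_⟩
    intro p hp q hq
    rw [hx] at hp; rw [hy] at hq
    simp at hp hq
    subst hp; subst hq
    exact he


theorem isPath_erase_fst {S T : Finset A} {R : Finset (A × A)} {x y : A} {l : List A}
    (hl : IsPath S T R l) (hx : x ∉ l) : IsPath S T (R.erase (x, y)) l :=
  ⟨hl.1, hl.2.1, hl.2.2.1,
    chain_erase_fst (fun a ha h => hx (h ▸ (List.dropLast_sublist l).subset ha)) hl.2.2.2⟩

theorem isPath_erase_snd {S T : Finset A} {R : Finset (A × A)} {x y : A} {l : List A}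
    (hl : IsPath S T R l) (hy : y ∉ l) : IsPath S T (R.erase (x, y)) l :=
  ⟨hl.1, hl.2.1, hl.2.2.1,
    chain_erase_snd (fun a ha h => hy (h ▸ (List.tail_sublist l).subset ha)) hl.2.2.2⟩

theorem menger_base (S T : Finset A) (k : ℕ)
    (hcut : ∀ C, IsCut S T (∅ : Finset (A × A)) C → k ≤ C.card) :
    ∃ f : Fin k → List A, (∀ i, IsPath S T (∅ : Finset (A × A)) (f i)) ∧
      ∀ i j, i ≠ j → ∀ a, a ∈ f i → a ∈ f j → False := by
  have hST : IsCut S T ∅ (S ∩ T) := by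
    intro l hl
    obtain ⟨hh, hl2, hn, hc⟩ := hl
    match l with
    | [] => exact absurd rfl hn
    | [a] => exact ⟨a, Finset.mem_inter.2 ⟨hh a rfl, hl2 a rfl⟩, by simp⟩
    | a :: b :: t => exact absurd (List.isChain_cons_cons.1 hc).1 (by simp)
  have hk := hcut _ hST
  obtain ⟨U, hUsub, hUcard⟩ := Finset.exists_subset_card_eq hk
  let g : Fin k → A := fun i => (U.equivFin.symm (Fin.cast hUcard.symm i) : A)
  have hgU : ∀ i, g i ∈ U := fun i => (U.equivFin.symm _).2
  have hgInj : Function.Injective g := by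
    intro i j h
    have := Subtype.ext h
    have := U.equivFin.symm.injective this
    exact Fin.cast_injective _ this
  refine ⟨fun i => [g i], ?_, ?_⟩
  · intro i
    have hmem := hUsub (hgU i)
    exact ⟨fun a ha => by simp at ha; subst ha; exact (Finset.mem_inter.1 hmem).1,
      fun a ha => by simp at ha; subst ha; exact (Finset.mem_inter.1 hmem).2,
      by simp, List.isChain_singleton _⟩
  · intro i j hij a hai haj
    simp at hai haj
    exact hij (hgInj (hai.symm.trans haj))

variable [Fintype A]

theorem menger_hard : ∀ (N : ℕ) (R : Finset (A × A)), R.card ≤ N →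
    ∀ (S T : Finset A) (k : ℕ), (∀ a : A, (a, a) ∉ R) →
    (∀ C, IsCut S T R C → k ≤ C.card) →
    ∃ f : Fin k → List A, (∀ i, IsPath S T R (f i)) ∧
      ∀ i j, i ≠ j → ∀ a, a ∈ f i → a ∈ f j → False := by
  intro N
  induction N with
  | zero =>
    intro R hR S T k hirr hcut
    obtain rfl : R = ∅ := Finset.card_eq_zero.1 (Nat.le_antisymm hR (Nat.zero_le _))
    exact menger_base S T k hcut
  | succ N ih =>
    intro R hR S T k hirr hcut
    rcases eq_or_ne R ∅ with rfl | hRne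
    · exact menger_base S T k hcut
    · obtain ⟨⟨x, y⟩, he⟩ := Finset.nonempty_iff_ne_empty.2 hRne
      set R' := R.erase (x, y) with hR'def
      have hR'sub : R' ⊆ R := Finset.erase_subset _ _
      have hR'card : R'.card ≤ N := by
        have h1 : R'.card = R.card - 1 := Finset.card_erase_of_mem he
        omega
      have hirr' : ∀ a, (a, a) ∉ R' := fun a h => hirr a (hR'sub h)
      have hxy : x ≠ y := fun h => hirr y (by rwa [h] at he)
      by_cases hCall : ∀ C, IsCut S T R' C → k ≤ C.card
      · obtain ⟨f, hf, hd⟩ := ih R' hR'card S T k hirr' hCall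
        exact ⟨f, fun i => (hf i).mono hR'sub, hd⟩
      push_neg at hCall
      obtain ⟨C, hCcut, hClt⟩ := hCall
      -- C ∪ {x} and C ∪ {y} are S-T cuts in R
      have cutX : IsCut S T R (insert x C) := by
        intro l hl
        by_cases hx : x ∈ l
        · exact ⟨x, Finset.mem_insert_self _ _, hx⟩
        · obtain ⟨c, hc1, hc2⟩ := hCcut l (isPath_erase_fst hl hx)
          exact ⟨c, Finset.mem_insert_of_mem hc1, hc2⟩
      have cutY : IsCut S T R (insert y C) := by
        intro l hl
        by_cases hy : y ∈ l
        · exact ⟨y, Finset.mem_insert_self _ _, hy⟩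
        · obtain ⟨c, hc1, hc2⟩ := hCcut l (isPath_erase_snd hl hy)
          exact ⟨c, Finset.mem_insert_of_mem hc1, hc2⟩
      have hxC : x ∉ C := by
        intro h
        have := hcut C (by rwa [Finset.insert_eq_self.2 h] at cutX)
        omega
      have hyC : y ∉ C := by
        intro h
        have := hcut C (by rwa [Finset.insert_eq_self.2 h] at cutY)
        omega
      have hkeq : C.card + 1 = k := by
        have h1 := hcut _ cutX
        rw [Finset.card_insert_of_notMem hxC] at h1
        omega
      set X := insert x C with hXdef
      set Y := insert y C with hYdef
      have hXcard : X.card = k := by rw [hXdef, Finset.card_insert_of_notMem hxC]; omega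
      have hYcard : Y.card = k := by rw [hYdef, Finset.card_insert_of_notMem hyC]; omega
      have hCX : C ⊆ X := Finset.subset_insert _ _
      have hCY : C ⊆ Y := Finset.subset_insert _ _
      have hyX : y ∉ X := by
        rw [hXdef, Finset.mem_insert]
        push_neg
        exact ⟨hxy.symm, hyC⟩
      have hxY : x ∉ Y := by
        rw [hYdef, Finset.mem_insert]
        push_neg
        exact ⟨hxy, hxC⟩
      have hxX : x ∈ X := Finset.mem_insert_self _ _
      have hyY : y ∈ Y := Finset.mem_insert_self _ _
      -- every S-X cut in R' is large
      have hcutX : ∀ D, IsCut S X R' D → k ≤ D.card := by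
        intro D hD
        refine hcut D ?_
        intro l hl
        by_cases hx : x ∈ l
        · obtain ⟨m', b', hq, hm', hb'⟩ := cutoff_spec (p := (· = x)) ⟨x, hx, rfl⟩
          have hb'' : b' = x := hb'
          rw [hb''] at hq
          have hchainR : (cutoff (· = x) l).Chain' (fun a b => (a, b) ∈ R) :=
            hl.2.2.2.prefix (cutoff_prefix _ _)
          have hchain : (cutoff (· = x) l).Chain' (fun a b => (a, b) ∈ R') := by
            refine chain_erase_fst ?_ hchainR
            intro a ha
            rw [hq, List.dropLast_concat] at ha
            exact hm' a ha
          have hpath : IsPath S X R' (cutoff (· = x) l) := by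
            refine ⟨?_, ?_, by rw [hq]; simp, hchain⟩
            · rw [head?_cutoff]; exact hl.1
            · rw [hq, List.getLast?_concat]
              intro a ha
              simp only [Option.mem_def, Option.some.injEq] at ha
              subst ha; exact hxX
          obtain ⟨d, hd1, hd2⟩ := hD _ hpath
          exact ⟨d, hd1, mem_of_mem_cutoff hd2⟩
        · have hl' := isPath_erase_fst (y := y) hl hx
          obtain ⟨c, hc1, hc2⟩ := hCcut l hl'
          obtain ⟨m', b', hq, hm', hb'⟩ := cutoff_spec (p := (· ∈ X)) ⟨c, hc2, hCX hc1⟩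
          have hpath : IsPath S X R' (cutoff (· ∈ X) l) := by
            refine ⟨?_, ?_, by rw [hq]; simp, hl'.2.2.2.prefix (cutoff_prefix _ _)⟩
            · rw [head?_cutoff]; exact hl.1
            · rw [hq, List.getLast?_concat]
              intro a ha
              simp only [Option.mem_def, Option.some.injEq] at ha
              subst ha; exact hb'
          obtain ⟨d, hd1, hd2⟩ := hD _ hpath
          exact ⟨d, hd1, mem_of_mem_cutoff hd2⟩
      -- every Y-T cut in R' is large
      have hcutY : ∀ D, IsCut Y T R' D → k ≤ D.card := by
        intro D hD
        refine hcut D ?_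
        intro l hl
        by_cases hy : y ∈ l
        · obtain ⟨b', m', hq, hb', hm'⟩ := scutoff_spec (p := (· = y)) ⟨y, hy, rfl⟩
          have hb'' : b' = y := hb'
          rw [hb''] at hq
          have hchainR : (scutoff (· = y) l).Chain' (fun a b => (a, b) ∈ R) :=
            hl.2.2.2.suffix (scutoff_suffix _ _)
          have hchain : (scutoff (· = y) l).Chain' (fun a b => (a, b) ∈ R') := by
            refine chain_erase_snd ?_ hchainR
            intro a ha
            rw [hq] at ha
            exact hm' a ha
          have hpath : IsPath Y T R' (scutoff (· = y) l) := by
            refine ⟨?_, ?_, by rw [hq]; simp, hchain⟩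
            · rw [hq]
              intro a ha
              simp only [List.head?_cons, Option.mem_def, Option.some.injEq] at ha
              subst ha; exact hyY
            · rw [getLast?_scutoff]; exact hl.2.1
          obtain ⟨d, hd1, hd2⟩ := hD _ hpath
          exact ⟨d, hd1, mem_of_mem_scutoff hd2⟩
        · have hl' := isPath_erase_snd (x := x) hl hy
          obtain ⟨c, hc1, hc2⟩ := hCcut l hl'
          obtain ⟨b', m', hq, hb', hm'⟩ := scutoff_spec (p := (· ∈ Y)) ⟨c, hc2, hCY hc1⟩
          have hpath : IsPath Y T R' (scutoff (· ∈ Y) l) := by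
            refine ⟨?_, ?_, by rw [hq]; simp, hl'.2.2.2.suffix (scutoff_suffix _ _)⟩
            · rw [hq]
              intro a ha
              simp only [List.head?_cons, Option.mem_def, Option.some.injEq] at ha
              subst ha; exact hb'
            · rw [getLast?_scutoff]; exact hl.2.1
          obtain ⟨d, hd1, hd2⟩ := hD _ hpath
          exact ⟨d, hd1, mem_of_mem_scutoff hd2⟩
      -- apply induction hypothesis to both subproblems
      obtain ⟨P0, hP0, hP0d⟩ := ih R' hR'card S X k hirr' hcutX
      obtain ⟨Q0, hQ0, hQ0d⟩ := ih R' hR'card Y T k hirr' hcutY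
      -- trim the paths
      set P : Fin k → List A := fun i => cutoff (· ∈ X) (P0 i) with hPdef
      set Q : Fin k → List A := fun i => scutoff (· ∈ Y) (Q0 i) with hQdef
      have hPsub : ∀ (i) (a : A), a ∈ P i → a ∈ P0 i := fun i a ha => mem_of_mem_cutoff ha
      have hQsub : ∀ (i) (a : A), a ∈ Q i → a ∈ Q0 i := fun i a ha => mem_of_mem_scutoff ha
      have hPhit : ∀ i, ∃ a ∈ P0 i, a ∈ X := by
        intro i
        have hne := (hP0 i).2.2.1
        have hg := List.getLast?_eq_getLast_of_ne_nil hne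
        exact ⟨_, List.getLast_mem hne, (hP0 i).2.1 _ hg⟩
      have hQhit : ∀ j, ∃ a ∈ Q0 j, a ∈ Y := by
        intro j
        have hne := (hQ0 j).2.2.1
        have hg := List.head?_eq_head hne
        exact ⟨_, List.head_mem hne, (hQ0 j).1 _ hg⟩
      have hPspec : ∀ i, ∃ mm b, P i = mm ++ [b] ∧ (∀ a ∈ mm, a ∉ X) ∧ b ∈ X :=
        fun i => cutoff_spec (hPhit i)
      have hQspec : ∀ j, ∃ b ww, Q j = b :: ww ∧ b ∈ Y ∧ ∀ a ∈ ww, a ∉ Y :=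
        fun j => scutoff_spec (hQhit j)
      choose m ep hPeq hPm hPmem using hPspec
      choose sp w hQeq hQmem hQw using hQspec
      have hPpath : ∀ i, IsPath S X R' (P i) := by
        intro i
        refine ⟨?_, ?_, by rw [hPeq i]; simp, (hP0 i).2.2.2.prefix (cutoff_prefix _ _)⟩
        · rw [hPdef]; rw [head?_cutoff]; exact (hP0 i).1
        · rw [hPeq i, List.getLast?_concat]
          intro a ha
          simp only [Option.mem_def, Option.some.injEq] at ha
          subst ha; exact hPmem i
      have hQpath : ∀ j, IsPath Y T R' (Q j) := by
        intro j
        refine ⟨?_, ?_, by rw [hQeq j]; simp, (hQ0 j).2.2.2.suffix (scutoff_suffix _ _)⟩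
        · rw [hQeq j]
          intro a ha
          simp only [List.head?_cons, Option.mem_def, Option.some.injEq] at ha
          subst ha; exact hQmem j
        · rw [hQdef]; rw [getLast?_scutoff]; exact (hQ0 j).2.1
      have hepP : ∀ i, ep i ∈ P i := fun i => by rw [hPeq i]; simp
      have hspQ : ∀ j, sp j ∈ Q j := fun j => by rw [hQeq j]; simp
      have hPd : ∀ i j, i ≠ j → ∀ a, a ∈ P i → a ∈ P j → False :=
        fun i j hij a h1 h2 => hP0d i j hij a (hPsub _ _ h1) (hPsub _ _ h2)
      have hQd : ∀ i j, i ≠ j → ∀ a, a ∈ Q i → a ∈ Q j → False :=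
        fun i j hij a h1 h2 => hQ0d i j hij a (hQsub _ _ h1) (hQsub _ _ h2)
      have hepInj : Function.Injective ep := by
        intro i j hij
        by_contra hne
        exact hPd i j hne (ep i) (hepP i) (hij ▸ hepP j)
      have hspInj : Function.Injective sp := by
        intro i j hij
        by_contra hne
        exact hQd i j hne (sp i) (hspQ i) (hij ▸ hspQ j)
      have hepSurj : ∀ b ∈ X, ∃ i, ep i = b := by
        have himg : Finset.image ep Finset.univ = X := by
          refine Finset.eq_of_subset_of_card_le ?_ ?_
          · intro b hb
            obtain ⟨i, _, rfl⟩ := Finset.mem_image.1 hb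
            exact hPmem i
          · rw [Finset.card_image_of_injective _ hepInj, Finset.card_univ,
              Fintype.card_fin, hXcard]
        intro b hb
        rw [← himg] at hb
        obtain ⟨i, _, rfl⟩ := Finset.mem_image.1 hb
        exact ⟨i, rfl⟩
      have hspSurj : ∀ b ∈ Y, ∃ j, sp j = b := by
        have himg : Finset.image sp Finset.univ = Y := by
          refine Finset.eq_of_subset_of_card_le ?_ ?_
          · intro b hb
            obtain ⟨j, _, rfl⟩ := Finset.mem_image.1 hb
            exact hQmem j
          · rw [Finset.card_image_of_injective _ hspInj, Finset.card_univ,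
              Fintype.card_fin, hYcard]
        intro b hb
        rw [← himg] at hb
        obtain ⟨j, _, rfl⟩ := Finset.mem_image.1 hb
        exact ⟨j, rfl⟩
      -- side path constructions
      have sideP : ∀ (i : Fin k) (a : A), a ∈ m i →
          ∃ q1 : List A, IsPath S {a} R' q1 ∧ q1.getLast? = some a ∧ ∀ c ∈ q1, c ∉ X := by
        intro i a hma
        have haP : a ∈ P i := by rw [hPeq i]; exact List.mem_append_left _ hma
        have haX : a ∉ X := hPm i a hma
        obtain ⟨m', b', hq, hm', hb'⟩ := cutoff_spec (p := (· = a)) ⟨a, haP, rfl⟩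
        have hb'' : b' = a := hb'
        rw [hb''] at hq
        have hpre := cutoff_prefix (· = a) (P i)
        have hlast : (cutoff (· = a) (P i)).getLast? = some a := by
          rw [hq]; exact List.getLast?_concat
        have hlen : (cutoff (· = a) (P i)).length < (P i).length := by
          refine lt_of_le_of_ne hpre.length_le fun h => haX ?_
          have heq : cutoff (· = a) (P i) = P i := hpre.eq_of_length h
          have h2 : (P i).getLast? = some a := by rw [← heq]; exact hlast
          rw [hPeq i, List.getLast?_concat] at h2
          simp only [Option.some.injEq] at h2
          rw [← h2]; exact hPmem i
        have hsub : ∀ c ∈ cutoff (· = a) (P i), c ∉ X := by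
          intro c hc
          have hcd := mem_dropLast_of_prefix hpre hlen hc
          rw [hPeq i, List.dropLast_concat] at hcd
          exact hPm i c hcd
        refine ⟨cutoff (· = a) (P i), ⟨?_, ?_, by rw [hq]; simp, ?_⟩, hlast, hsub⟩
        · rw [head?_cutoff]; exact (hPpath i).1
        · rw [hlast]
          intro b hb
          simp only [Option.mem_def, Option.some.injEq] at hb
          subst hb; exact Finset.mem_singleton_self _
        · exact (hPpath i).2.2.2.prefix hpre
      have sideQ : ∀ (j : Fin k) (a : A), a ∈ w j →
          ∃ q2 : List A, IsPath {a} T R' q2 ∧ q2.head? = some a ∧ ∀ c ∈ q2, c ∉ Y := by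
        intro j a hwa
        have haQ : a ∈ Q j := by rw [hQeq j]; exact List.mem_cons_of_mem _ hwa
        have haY : a ∉ Y := hQw j a hwa
        obtain ⟨b', m', hq, hb', hm'⟩ := scutoff_spec (p := (· = a)) ⟨a, haQ, rfl⟩
        have hb'' : b' = a := hb'
        rw [hb''] at hq
        have hsuf := scutoff_suffix (· = a) (Q j)
        have hhead : (scutoff (· = a) (Q j)).head? = some a := by rw [hq]; rfl
        have hlen : (scutoff (· = a) (Q j)).length < (Q j).length := by
          refine lt_of_le_of_ne hsuf.length_le fun h => haY ?_
          have heq : scutoff (· = a) (Q j) = Q j := hsuf.eq_of_length h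
          have h2 : (Q j).head? = some a := by rw [← heq]; exact hhead
          rw [hQeq j, List.head?_cons] at h2
          simp only [Option.some.injEq] at h2
          rw [← h2]; exact hQmem j
        have hsub : ∀ c ∈ scutoff (· = a) (Q j), c ∉ Y := by
          intro c hc
          have hcd := mem_tail_of_suffix hsuf hlen hc
          rw [hQeq j, List.tail_cons] at hcd
          exact hQw j c hcd
        refine ⟨scutoff (· = a) (Q j), ⟨?_, ?_, by rw [hq]; simp, ?_⟩, hhead, hsub⟩
        · rw [hhead]
          intro b hb
          simp only [Option.mem_def, Option.some.injEq] at hb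
          subst hb; exact Finset.mem_singleton_self _
        · rw [getLast?_scutoff]; exact (hQpath j).2.1
        · exact (hQpath j).2.2.2.suffix hsuf
      -- the key crossing lemma
      have key : ∀ (i j : Fin k) (a : A), a ∈ P i → a ∈ Q j → a = ep i ∧ a = sp j := by
        intro i j a haP haQ
        have hPcase : a ∈ m i ∨ a = ep i := by
          rw [hPeq i] at haP
          simpa using haP
        have hQcase : a = sp j ∨ a ∈ w j := by
          rw [hQeq j] at haQ
          simpa using haQ
        rcases hPcase with hma | hepa
        · exfalso
          obtain ⟨q1, hq1path, hq1last, hq1sub⟩ := sideP i a hma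
          rcases hQcase with hspa | hwa
          · -- a ∈ m i, a = sp j : glue q1 with Q j
            have hglue : IsPath S T R' (q1 ++ (Q j).tail) :=
              isPath_glue_eq hq1path (hQpath j) (by rw [hq1last, hQeq j, List.head?_cons, hspa])
            obtain ⟨c, hcC, hcl⟩ := hCcut _ hglue
            rcases List.mem_append.1 hcl with h | h
            · exact hq1sub c h (hCX hcC)
            · rw [hQeq j, List.tail_cons] at h
              exact hQw j c h (hCY hcC)
          · -- a ∈ m i, a ∈ w j
            obtain ⟨q2, hq2path, hq2head, hq2sub⟩ := sideQ j a hwa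
            have hglue : IsPath S T R' (q1 ++ q2.tail) :=
              isPath_glue_eq hq1path hq2path (by rw [hq1last, hq2head])
            obtain ⟨c, hcC, hcl⟩ := hCcut _ hglue
            rcases List.mem_append.1 hcl with h | h
            · exact hq1sub c h (hCX hcC)
            · exact hq2sub c (List.mem_of_mem_tail h) (hCY hcC)
        · rcases hQcase with hspa | hwa
          · exact ⟨hepa, hspa⟩
          · exfalso
            obtain ⟨q2, hq2path, hq2head, hq2sub⟩ := sideQ j a hwa
            have hglue : IsPath S T R' (P i ++ q2.tail) :=
              isPath_glue_eq (hPpath i) hq2path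
                (by rw [hPeq i, List.getLast?_concat, hq2head, ← hepa])
            obtain ⟨c, hcC, hcl⟩ := hCcut _ hglue
            rcases List.mem_append.1 hcl with h | h
            · rw [hPeq i] at h
              rcases List.mem_append.1 h with h' | h'
              · exact hPm i c h' (hCX hcC)
              · simp only [List.mem_singleton] at h'
                subst h'
                rw [← hepa] at hcC
                exact hq2sub a (mem_of_head? hq2head) (hCY hcC)
            · exact hq2sub c (List.mem_of_mem_tail h) (hCY hcC)
      -- choose matched partners
      have htarget : ∀ i, (if ep i = x then y else ep i) ∈ Y := by
        intro i
        by_cases h : ep i = x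
        · rw [if_pos h]; exact hyY
        · rw [if_neg h]
          have hx := hPmem i
          rw [hXdef, Finset.mem_insert] at hx
          rcases hx with h' | h'
          · exact absurd h' h
          · exact hCY h'
      choose σ hσ using fun i => hspSurj _ (htarget i)
      have hσInj : Function.Injective σ := by
        intro i j h
        have h2 : (if ep i = x then y else ep i) = (if ep j = x then y else ep j) := by
          rw [← hσ i, ← hσ j, h]
        by_cases h1 : ep i = x <;> by_cases h3 : ep j = x
        · exact hepInj (h1.trans h3.symm)
        · rw [if_pos h1, if_neg h3] at h2
          exfalso; apply hyX; rw [h2]; exact hPmem j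
        · rw [if_neg h1, if_pos h3] at h2
          exfalso; apply hyX; rw [← h2]; exact hPmem i
        · rw [if_neg h1, if_neg h3] at h2
          exact hepInj h2
      refine ⟨fun i => P i ++ (if ep i = x then Q (σ i) else (Q (σ i)).tail), ?_, ?_⟩
      · intro i
        show IsPath S T R (P i ++ if ep i = x then Q (σ i) else (Q (σ i)).tail)
        by_cases h : ep i = x
        · rw [if_pos h]
          refine isPath_glue_edge (X := X) (X' := Y) ((hPpath i).mono hR'sub)
            ((hQpath (σ i)).mono hR'sub) ?_ ?_ he
          · rw [hPeq i, List.getLast?_concat, h]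
          · rw [hQeq (σ i), List.head?_cons, hσ i, if_pos h]
        · rw [if_neg h]
          refine isPath_glue_eq (X := X) (X' := Y) ((hPpath i).mono hR'sub)
            ((hQpath (σ i)).mono hR'sub) ?_
          rw [hPeq i, List.getLast?_concat, hQeq (σ i), List.head?_cons, hσ i, if_neg h]
      · intro i j hij a hai haj
        rw [show (fun i => P i ++ if ep i = x then Q (σ i) else (Q (σ i)).tail) i
            = P i ++ if ep i = x then Q (σ i) else (Q (σ i)).tail from rfl] at hai
        rw [show (fun i => P i ++ if ep i = x then Q (σ i) else (Q (σ i)).tail) j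
            = P j ++ if ep j = x then Q (σ j) else (Q (σ j)).tail from rfl] at haj
        have hmem1 : a ∈ P i ∨ a ∈ Q (σ i) := by
          rcases List.mem_append.1 hai with h | h
          · exact Or.inl h
          · right
            by_cases h' : ep i = x
            · rwa [if_pos h'] at h
            · rw [if_neg h'] at h
              exact List.mem_of_mem_tail h
        have hmem2 : a ∈ P j ∨ a ∈ Q (σ j) := by
          rcases List.mem_append.1 haj with h | h
          · exact Or.inl h
          · right
            by_cases h' : ep j = x
            · rwa [if_pos h'] at h
            · rw [if_neg h'] at h
              exact List.mem_of_mem_tail h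
        rcases hmem1 with h1 | h1 <;> rcases hmem2 with h2 | h2
        · exact hPd i j hij a h1 h2
        · obtain ⟨e1, e2⟩ := key i (σ j) a h1 h2
          rw [hσ j] at e2
          by_cases h3 : ep j = x
          · rw [if_pos h3] at e2
            apply hyX; rw [← e2, e1]; exact hPmem i
          · rw [if_neg h3] at e2
            exact hij (hepInj (e1.symm.trans e2))
        · obtain ⟨e1, e2⟩ := key j (σ i) a h2 h1
          rw [hσ i] at e2
          by_cases h3 : ep i = x
          · rw [if_pos h3] at e2
            apply hyX; rw [← e2, e1]; exact hPmem j
          · rw [if_neg h3] at e2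
            exact hij (hepInj (e2.symm.trans e1))
        · exact hQd (σ i) (σ j) (fun hh => hij (hσInj hh)) a h1 h2
section App
variable {V : Type*} [Fintype V] [DecidableEq V]

theorem strictMono_fin_nat {n : ℕ} {f : Fin n → ℕ}
    (h : ∀ (i : ℕ) (h1 : i + 1 < n), f ⟨i, by omega⟩ < f ⟨i + 1, h1⟩) : StrictMono f := by
  have key : ∀ (d a : ℕ) (h2 : a + d + 1 < n), f ⟨a, by omega⟩ < f ⟨a + d + 1, h2⟩ := by
    intro d
    induction d with
    | zero => intro a h2; exact h a h2
    | succ d ihd =>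
      intro a h2
      have h3 := ihd a (by omega)
      have h4 := h (a + d + 1) (by omega)
      have h5 : f ⟨a, by omega⟩ < f ⟨a + d + 1 + 1, by omega⟩ := lt_trans h3 h4
      convert h5 using 3
      all_goals omega
  intro a b hab
  obtain ⟨a, ha⟩ := a
  obtain ⟨b, hb⟩ := b
  have hab' : a < b := hab
  have hk := key (b - a - 1) a (by omega)
  convert hk using 3
  · rfl
  · omega

def T0 (lab : V → V → Finset ℕ) : Finset ℕ :=
  Finset.univ.biUnion fun u => Finset.univ.biUnion fun w => lab u w

theorem mem_T0 {lab : V → V → Finset ℕ} {u w : V} {t : ℕ} (h : t ∈ lab u w) : t ∈ T0 lab := by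
  simp only [T0, Finset.mem_biUnion]
  exact ⟨u, Finset.mem_univ _, w, Finset.mem_univ _, h⟩

abbrev Ev (lab : V → V → Finset ℕ) := V × {t : ℕ // t ∈ T0 lab}

open Classical in
noncomputable def Sset (E : V → V → Prop) (lab : V → V → Finset ℕ) (s : V) : Finset (Ev lab) :=
  Finset.univ.filter fun a => E s a.1 ∧ (a.2 : ℕ) ∈ lab s a.1

open Classical in
noncomputable def Tset (lab : V → V → Finset ℕ) (v : V) : Finset (Ev lab) :=
  Finset.univ.filter fun a => a.1 = v

open Classical in
noncomputable def Rset (E : V → V → Prop) (lab : V → V → Finset ℕ) :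
    Finset (Ev lab × Ev lab) :=
  Finset.univ.filter fun p =>
    (p.1.2 : ℕ) < (p.2.2 : ℕ) ∧ E p.1.1 p.2.1 ∧ (p.2.2 : ℕ) ∈ lab p.1.1 p.2.1

theorem mem_Sset {E : V → V → Prop} {lab : V → V → Finset ℕ} {s : V} {a : Ev lab} :
    a ∈ Sset E lab s ↔ E s a.1 ∧ (a.2 : ℕ) ∈ lab s a.1 := by
  simp [Sset]

theorem mem_Tset {lab : V → V → Finset ℕ} {v : V} {a : Ev lab} :
    a ∈ Tset lab v ↔ a.1 = v := by
  simp [Tset]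

theorem mem_Rset {E : V → V → Prop} {lab : V → V → Finset ℕ} {p : Ev lab × Ev lab} :
    p ∈ Rset E lab ↔
      (p.1.2 : ℕ) < (p.2.2 : ℕ) ∧ E p.1.1 p.2.1 ∧ (p.2.2 : ℕ) ∈ lab p.1.1 p.2.1 := by
  simp [Rset]

theorem journey_len_pos {E : V → V → Prop} {lab : V → V → Finset ℕ} {s v : V}
    (hsv : s ≠ v) (J : Journey E lab s v) : 0 < J.len := by
  by_contra h
  push_neg at h
  have h0 : J.len = 0 := by omega
  apply hsv
  have h1 := J.first
  have h2 := J.last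
  have h3 : (0 : Fin (J.len + 1)) = Fin.last J.len := by
    apply Fin.ext
    simp [h0]
  rw [h3] at h1
  rw [h1] at h2
  exact h2


theorem exists_path_of_journey {E : V → V → Prop} {lab : V → V → Finset ℕ} {s v : V}
    (hsv : s ≠ v) (J : Journey E lab s v) :
    ∃ l : List (Ev lab), IsPath (Sset E lab s) (Tset lab v) (Rset E lab) l ∧
      ∀ a ∈ l, ∃ i : Fin J.len, J.vert i.succ = a.1 ∧ J.lbl i = (a.2 : ℕ) := by
  have hn : 0 < J.len := journey_len_pos hsv J
  set n := J.len with hndef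
  let ev : Fin n → Ev lab := fun i => (J.vert i.succ, ⟨J.lbl i, mem_T0 (J.mem i)⟩)
  have hlen : (List.ofFn ev).length = n := List.length_ofFn
  have hne : List.ofFn ev ≠ [] := by
    rw [← List.length_pos_iff]
    omega
  have hget : ∀ (i : ℕ) (h : i < (List.ofFn ev).length),
      (List.ofFn ev).get ⟨i, h⟩ = ev ⟨i, by omega⟩ := by
    intro i h
    simp [List.get_eq_getElem, List.getElem_ofFn]
  refine ⟨List.ofFn ev, ⟨?_, ?_, hne, ?_⟩, ?_⟩
  · intro a ha
    rw [List.head?_eq_head hne] at ha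
    simp only [Option.mem_def, Option.some.injEq] at ha
    subst ha
    rw [List.head_eq_getElem_zero hne] at *
    have h0 : (List.ofFn ev)[0] = ev ⟨0, hn⟩ := by
      have := hget 0 (by omega)
      simpa [List.get_eq_getElem] using this
    rw [h0]
    rw [mem_Sset]
    have he := J.edge ⟨0, hn⟩
    have hm := J.mem ⟨0, hn⟩
    have hc : (⟨0, hn⟩ : Fin n).castSucc = (0 : Fin (n + 1)) := by
      apply Fin.ext; simp
    rw [hc, J.first] at he hm
    exact ⟨he, hm⟩
  · intro a ha
    rw [List.getLast?_eq_getLast_of_ne_nil hne] at ha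
    simp only [Option.mem_def, Option.some.injEq] at ha
    subst ha
    rw [List.getLast_eq_getElem]
    have h0 : (List.ofFn ev)[(List.ofFn ev).length - 1]'(by omega) = ev ⟨n - 1, by omega⟩ := by
      have := hget ((List.ofFn ev).length - 1) (by omega)
      simp only [List.get_eq_getElem] at this
      rw [this]
      congr 1
      apply Fin.ext
      simp [hlen]
    rw [h0, mem_Tset]
    show J.vert (⟨n - 1, by omega⟩ : Fin n).succ = v
    have hs : (⟨n - 1, by omega⟩ : Fin n).succ = Fin.last n := by
      apply Fin.ext
      simp [Fin.val_last]
      omega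
    rw [hs]
    exact J.last
  · rw [List.chain'_iff_get]
    intro i hi
    rw [hget i (by omega), hget (i + 1) (by omega), mem_Rset]
    have hi1 : i + 1 < n := by omega
    refine ⟨?_, ?_, ?_⟩
    · exact J.mono (show (⟨i, by omega⟩ : Fin n) < ⟨i + 1, hi1⟩ by
        rw [Fin.lt_def]; simp)
    · have he := J.edge ⟨i + 1, hi1⟩
      have hc : (⟨i + 1, hi1⟩ : Fin n).castSucc = (⟨i, by omega⟩ : Fin n).succ := by
        apply Fin.ext; simp
      rwa [hc] at he
    · have hm := J.mem ⟨i + 1, hi1⟩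
      have hc : (⟨i + 1, hi1⟩ : Fin n).castSucc = (⟨i, by omega⟩ : Fin n).succ := by
        apply Fin.ext; simp
      rwa [hc] at hm
  · intro a ha
    rw [List.mem_ofFn] at ha
    obtain ⟨i, rfl⟩ := ha
    exact ⟨i, rfl, rfl⟩

theorem exists_journey_of_path {E : V → V → Prop} {lab : V → V → Finset ℕ} {s v : V}
    {l : List (Ev lab)} (h : IsPath (Sset E lab s) (Tset lab v) (Rset E lab) l) :
    ∃ J : Journey E lab s v, ∀ i : Fin J.len, ∃ a ∈ l,
      J.vert i.succ = a.1 ∧ J.lbl i = (a.2 : ℕ) := by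
  obtain ⟨hhead, hlast, hne, hchain⟩ := h
  set n := l.length with hndef
  have hn : 0 < n := List.length_pos_iff.2 hne
  have hheadS : l.head hne ∈ Sset E lab s := hhead _ (List.head?_eq_head hne)
  have hlastT : l.getLast hne ∈ Tset lab v := hlast _ (List.getLast?_eq_getLast_of_ne_nil hne)
  rw [mem_Sset] at hheadS
  rw [mem_Tset] at hlastT
  rw [List.chain'_iff_get] at hchain
  let vert : Fin (n + 1) → V := fun i =>
    if h : (i : ℕ) = 0 then s else (l.get ⟨(i : ℕ) - 1, by omega⟩).1
  let lbl : Fin n → ℕ := fun i => ((l.get i).2 : ℕ)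
  have hvs : ∀ (i : Fin n), vert i.succ = (l.get i).1 := by
    intro i
    show dite _ _ _ = _
    rw [dif_neg (by simp)]
    congr 1
  have getc : ∀ (a b : ℕ) (ha : a < n) (hb : b < n), a = b →
      l.get ⟨a, ha⟩ = l.get ⟨b, hb⟩ := by
    intro a b ha hb h
    subst h
    rfl
  have hvc : ∀ (i : Fin n), (i : ℕ) ≠ 0 →
      vert i.castSucc = (l.get ⟨(i : ℕ) - 1, by have := i.isLt; omega⟩).1 := by
    intro i hi
    show dite _ _ _ = _
    rw [dif_neg (by simpa using hi)]
    exact congrArg Prod.fst (getc _ _ _ _ (by simp))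
  have hvc0 : ∀ (i : Fin n), (i : ℕ) = 0 → vert i.castSucc = s := by
    intro i hi
    show dite _ _ _ = _
    rw [dif_pos (by simpa using hi)]
  have hR : ∀ (i : ℕ) (hi : i + 1 < n),
      ((l.get ⟨i, by omega⟩).2 : ℕ) < ((l.get ⟨i + 1, hi⟩).2 : ℕ) ∧
      E (l.get ⟨i, by omega⟩).1 (l.get ⟨i + 1, hi⟩).1 ∧
      ((l.get ⟨i + 1, hi⟩).2 : ℕ) ∈ lab (l.get ⟨i, by omega⟩).1 (l.get ⟨i + 1, hi⟩).1 := by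
    intro i hi
    have := hchain i (by omega)
    rwa [mem_Rset] at this
  have hhead_get : l.head hne = l.get ⟨0, hn⟩ := by
    rw [List.head_eq_getElem_zero hne]
    simp [List.get_eq_getElem]
  have hlast_get : l.getLast hne = l.get ⟨n - 1, by omega⟩ := by
    rw [List.getLast_eq_getElem]
    simp [List.get_eq_getElem, hndef]
  have hsucc_get : ∀ (i : Fin n), (i : ℕ) ≠ 0 → ∀ (hlt : (i : ℕ) - 1 + 1 < n),
      l.get ⟨(i : ℕ) - 1 + 1, hlt⟩ = l.get i := by
    intro i hi hlt
    have h1 := getc ((i : ℕ) - 1 + 1) (i : ℕ) hlt i.isLt (by omega)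
    rw [h1, Fin.eta]
  refine ⟨⟨n, vert, lbl, ?_, ?_, ?_, ?_, ?_⟩, ?_⟩
  · show dite _ _ _ = _
    rw [dif_pos (by simp)]
  · show dite _ _ _ = _
    rw [dif_neg (show ¬((Fin.last n : ℕ) = 0) from by simp [Fin.val_last]; omega)]
    rw [hlast_get] at hlastT
    rw [← hlastT]
    exact congrArg Prod.fst (getc _ _ _ _ (by simp [Fin.val_last]))
  · intro i
    rcases eq_or_ne (i : ℕ) 0 with h0 | h0
    · rw [hvc0 i h0, hvs i]
      have hieq : i = ⟨0, hn⟩ := Fin.ext h0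
      rw [hieq, ← hhead_get]
      exact hheadS.1
    · rw [hvc i h0, hvs i]
      have h2 := (hR ((i : ℕ) - 1) (by omega)).2.1
      rwa [hsucc_get i h0 _] at h2
  · intro i
    rcases eq_or_ne (i : ℕ) 0 with h0 | h0
    · rw [hvc0 i h0, hvs i]
      show ((l.get i).2 : ℕ) ∈ _
      have hieq : i = ⟨0, hn⟩ := Fin.ext h0
      rw [hieq, ← hhead_get]
      exact hheadS.2
    · rw [hvc i h0, hvs i]
      show ((l.get i).2 : ℕ) ∈ _
      have h2 := (hR ((i : ℕ) - 1) (by omega)).2.2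
      rwa [hsucc_get i h0 _] at h2
  · apply strictMono_fin_nat
    intro i hi
    exact (hR i hi).1
  · intro i
    refine ⟨l.get i, ?_, hvs i, rfl⟩
    have := List.get_mem l i
    simpa [Fin.eta] using this

end App

end TMenger

/-- Menger's temporal analogue (in-disjoint version): the maximum number of pairwise
in-disjoint journeys from `s` to `v` equals the minimum number of node arrival
times whose removal leaves no journey from `s` to `v`. -/
theorem menger_temporal_in_disjoint {V : Type*} [Fintype V] [DecidableEq V]
    (E : V → V → Prop) (lab : V → V → Finset ℕ) (s v : V) (hsv : s ≠ v) :
    ∃ M : ℕ,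
      IsGreatest {n | ∃ J : Fin n → Journey E lab s v,
        ∀ i j, i ≠ j → InDisjoint (J i) (J j)} M ∧
      IsLeast {n | ∃ D : Finset (V × ℕ), D.card = n ∧
        IsEmpty (Journey E (removeArrivals lab D) s v)} M := by
  classical
  set S := TMenger.Sset E lab s with hSdef
  set Tt := TMenger.Tset lab v with hTdef
  set R := TMenger.Rset E lab with hRdef
  -- the set of cut cardinalities is nonempty
  have hDne : {n | ∃ D : Finset (V × ℕ), D.card = n ∧
      IsEmpty (Journey E (removeArrivals lab D) s v)}.Nonempty := by
    refine ⟨(Finset.univ.image (fun a : TMenger.Ev lab => (a.1, (a.2 : ℕ)))).card,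
      Finset.univ.image (fun a : TMenger.Ev lab => (a.1, (a.2 : ℕ))), rfl, ?_⟩
    constructor
    intro J
    have hn := TMenger.journey_len_pos hsv J
    have hm := J.mem ⟨0, hn⟩
    simp only [removeArrivals, Finset.mem_filter] at hm
    apply hm.2
    exact Finset.mem_image.2
      ⟨(J.vert (⟨0, hn⟩ : Fin J.len).succ, ⟨J.lbl ⟨0, hn⟩, TMenger.mem_T0 hm.1⟩),
        Finset.mem_univ _, rfl⟩
  set M := sInf {n | ∃ D : Finset (V × ℕ), D.card = n ∧
    IsEmpty (Journey E (removeArrivals lab D) s v)} with hMdef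
  have hMmem := Nat.sInf_mem hDne
  -- every abstract cut has at least M elements
  have hcutlb : ∀ C : Finset (TMenger.Ev lab), TMenger.IsCut S Tt R C → M ≤ C.card := by
    intro C hC
    have hinj2 : Set.InjOn (fun a : TMenger.Ev lab => (a.1, (a.2 : ℕ))) C := by
      intro a _ b _ hab
      have hab' : (a.1, (a.2 : ℕ)) = (b.1, (b.2 : ℕ)) := hab
      rw [Prod.mk.injEq] at hab'
      exact Prod.ext hab'.1 (Subtype.ext hab'.2)
    refine le_trans (Nat.sInf_le ?_) (le_of_eq (Finset.card_image_of_injOn hinj2))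
    refine ⟨C.image (fun a => (a.1, (a.2 : ℕ))), rfl, ?_⟩
    constructor
    intro J'
    have hmem : ∀ i : Fin J'.len, J'.lbl i ∈ lab (J'.vert i.castSucc) (J'.vert i.succ) ∧
        (J'.vert i.succ, J'.lbl i) ∉ C.image (fun a => (a.1, (a.2 : ℕ))) := by
      intro i
      have := J'.mem i
      simp only [removeArrivals, Finset.mem_filter] at this
      exact this
    let Jl : Journey E lab s v :=
      ⟨J'.len, J'.vert, J'.lbl, J'.first, J'.last, J'.edge, fun i => (hmem i).1, J'.mono⟩
    obtain ⟨l, hl, hlev⟩ := TMenger.exists_path_of_journey hsv Jl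
    obtain ⟨a, haC, hal⟩ := hC l hl
    obtain ⟨i, hi1, hi2⟩ := hlev a hal
    exact (hmem i).2 (Finset.mem_image.2 ⟨a, haC, Prod.ext hi1.symm hi2.symm⟩)
  refine ⟨M, ⟨?_, ?_⟩, hMmem, fun n hn => Nat.sInf_le hn⟩
  · -- there exist M pairwise in-disjoint journeys
    have hirr : ∀ a : TMenger.Ev lab, (a, a) ∉ R := by
      intro a ha
      rw [hRdef, TMenger.mem_Rset] at ha
      exact lt_irrefl _ ha.1
    obtain ⟨f, hf, hfd⟩ := TMenger.menger_hard R.card R le_rfl S Tt M hirr hcutlb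
    choose Js hJs using fun i => TMenger.exists_journey_of_path (hf i)
    refine ⟨Js, ?_⟩
    intro i j hij ii jj hv hlb
    obtain ⟨a, hal, ha1, ha2⟩ := hJs i ii
    obtain ⟨b, hbl, hb1, hb2⟩ := hJs j jj
    have hab : a = b := by
      refine Prod.ext ?_ (Subtype.ext ?_)
      · rw [← ha1, ← hb1, hv]
      · rw [← ha2, ← hb2, hlb]
    exact hfd i j hij a hal (hab ▸ hbl)
  · -- M is an upper bound for families of in-disjoint journeys
    rintro n ⟨J, hJ⟩
    obtain ⟨D₀, hD₀card, hD₀sep⟩ := hMmem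
    have harr : ∀ i : Fin n, ∃ ii : Fin (J i).len,
        ((J i).vert ii.succ, (J i).lbl ii) ∈ D₀ := by
      intro i
      by_contra hno
      push_neg at hno
      exact hD₀sep.false ⟨(J i).len, (J i).vert, (J i).lbl, (J i).first, (J i).last,
        (J i).edge, fun ii => by
          simp only [removeArrivals, Finset.mem_filter]
          exact ⟨(J i).mem ii, hno ii⟩, (J i).mono⟩
    choose g hg using harr
    have hinj : Function.Injective (fun i : Fin n => ((J i).vert (g i).succ, (J i).lbl (g i))) := by
      intro i j hij2
      by_contra hne2
      have hij3 : ((J i).vert (g i).succ, (J i).lbl (g i))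
          = ((J j).vert (g j).succ, (J j).lbl (g j)) := hij2
      rw [Prod.mk.injEq] at hij3
      exact hJ i j hne2 (g i) (g j) hij3.1 hij3.2
    calc n = (Finset.univ : Finset (Fin n)).card := by simp
      _ ≤ D₀.card := Finset.card_le_card_of_injOn _ (fun i _ => hg i) (hinj.injOn)
      _ = M := hD₀card
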